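/- Let T be a tree (a connected acyclic finite simple graph), let M be a maximum matching of T, and let uv be an edge of T such that u is not covered by any edge of M. Then the contraction T/uv is a tree with μ(T/uv) = μ(T) and α(T/uv) = α(T) − 1. -/

import Mathlib

open SimpleGraph

universe u
variable {V : Type*} {W : Type*}

/-- `H` is isomorphic to an induced subgraph of `G`. -/
def SimpleGraph.IsIndSubgraph {W V : Type*} (H : SimpleGraph W) (G : SimpleGraph V) : Prop :=
  ∃ f : W ↪ V, ∀ a b, G.Adj (f a) (f b) ↔ H.Adj a b

/-- A set of pairwise non-adjacent vertices. -/
def SimpleGraph.IsIndepSet' (G : SimpleGraph V) (s : Set V) : Prop :=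
  s.Pairwise fun a b => ¬ G.Adj a b

/-- The independence number of `G`. -/
noncomputable def SimpleGraph.indepNum' (G : SimpleGraph V) : ℕ :=
  sSup {n | ∃ s : Set V, G.IsIndepSet' s ∧ s.ncard = n}

/-- A matching, viewed as a set of pairwise disjoint edges of `G`. -/
def SimpleGraph.IsMatchingSet (G : SimpleGraph V) (M : Set (Sym2 V)) : Prop :=
  M ⊆ G.edgeSet ∧ M.Pairwise fun e f => ∀ x, x ∈ e → x ∉ f

/-- The matching number of `G`. -/
noncomputable def SimpleGraph.matchingNum (G : SimpleGraph V) : ℕ :=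
  sSup {n | ∃ M : Set (Sym2 V), G.IsMatchingSet M ∧ M.ncard = n}

/-- A vertex cover. -/
def SimpleGraph.IsVertexCover' (G : SimpleGraph V) (C : Set V) : Prop :=
  ∀ u v, G.Adj u v → u ∈ C ∨ v ∈ C

/-- Contraction of the edge `uv`, identifying the new vertex with `v`. -/
def SimpleGraph.contractEdge (G : SimpleGraph V) (u v : V) : SimpleGraph {x : V // x ≠ u} where
  Adj x y := x ≠ y ∧ (G.Adj x y ∨ (x.1 = v ∧ G.Adj u y) ∨ (y.1 = v ∧ G.Adj u x))
  symm := ⟨by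
    rintro x y ⟨hne, h⟩
    refine ⟨hne.symm, ?_⟩
    rcases h with h | h | h
    · exact Or.inl h.symm
    · exact Or.inr (Or.inr h)
    · exact Or.inr (Or.inl h)⟩
  loopless := ⟨fun x h => h.1 rfl⟩

/-- A maximal clique. -/
def SimpleGraph.IsMaxlClique (G : SimpleGraph V) (K : Set V) : Prop :=
  G.IsClique K ∧ ∀ K' : Set V, G.IsClique K' → K ⊆ K' → K' = K

section sup
variable [Fintype V] (G : SimpleGraph V)

lemma matching_bdd : BddAbove {n | ∃ M : Set (Sym2 V), G.IsMatchingSet M ∧ M.ncard = n} := by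
  refine ⟨(Set.univ : Set (Sym2 V)).ncard, ?_⟩
  rintro n ⟨M, _, rfl⟩
  exact Set.ncard_le_ncard (Set.subset_univ _) Set.finite_univ

lemma indep_bdd : BddAbove {n | ∃ s : Set V, G.IsIndepSet' s ∧ s.ncard = n} := by
  refine ⟨(Set.univ : Set V).ncard, ?_⟩
  rintro n ⟨s, _, rfl⟩
  exact Set.ncard_le_ncard (Set.subset_univ _) Set.finite_univ

lemma matching_nonempty : {n | ∃ M : Set (Sym2 V), G.IsMatchingSet M ∧ M.ncard = n}.Nonempty :=
  ⟨0, ∅, ⟨Set.empty_subset _, Set.pairwise_empty _⟩, by simp⟩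

lemma indep_nonempty : {n | ∃ s : Set V, G.IsIndepSet' s ∧ s.ncard = n}.Nonempty :=
  ⟨0, ∅, Set.pairwise_empty _, by simp⟩

lemma le_matchingNum {M : Set (Sym2 V)} (h : G.IsMatchingSet M) : M.ncard ≤ G.matchingNum :=
  le_csSup (matching_bdd G) ⟨M, h, rfl⟩

lemma le_indepNum {s : Set V} (h : G.IsIndepSet' s) : s.ncard ≤ G.indepNum' :=
  le_csSup (indep_bdd G) ⟨s, h, rfl⟩

lemma matchingNum_le {k : ℕ} (h : ∀ M : Set (Sym2 V), G.IsMatchingSet M → M.ncard ≤ k) :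
    G.matchingNum ≤ k := csSup_le (matching_nonempty G) (by rintro n ⟨M, hM, rfl⟩; exact h M hM)

lemma indepNum_le {k : ℕ} (h : ∀ s : Set V, G.IsIndepSet' s → s.ncard ≤ k) :
    G.indepNum' ≤ k := csSup_le (indep_nonempty G) (by rintro n ⟨s, hs, rfl⟩; exact h s hs)

lemma exists_max_matching : ∃ M : Set (Sym2 V), G.IsMatchingSet M ∧ M.ncard = G.matchingNum :=
  Nat.sSup_mem (matching_nonempty G) (matching_bdd G)

lemma exists_max_indep : ∃ s : Set V, G.IsIndepSet' s ∧ s.ncard = G.indepNum' :=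
  Nat.sSup_mem (indep_nonempty G) (indep_bdd G)

/-- weak duality -/
lemma indep_add_matching_le {s : Set V} (hs : G.IsIndepSet' s) {M : Set (Sym2 V)}
    (hM : G.IsMatchingSet M) : s.ncard + M.ncard ≤ Fintype.card V := by
  classical
  have hchoice : ∀ e ∈ M, ∃ x, x ∈ e ∧ x ∉ s := by
    intro e he
    induction e with
    | _ a b =>
      have hadj : G.Adj a b := (G.mem_edgeSet).1 (hM.1 he)
      by_cases ha : a ∈ s
      · by_cases hb : b ∈ s
        · exact absurd hadj (hs ha hb hadj.ne)
        · exact ⟨b, Sym2.mem_mk_right a b, hb⟩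
      · exact ⟨a, Sym2.mem_mk_left a b, ha⟩
  rcases isEmpty_or_nonempty V with hV | hV
  · have hs0 : s = ∅ := Set.eq_empty_of_isEmpty s
    have hM0 : M = ∅ := Set.eq_empty_of_isEmpty M
    simp [hs0, hM0]
  choose! f hf1 hf2 using hchoice
  have himg : (Set.image f M) ⊆ sᶜ := by
    rintro x ⟨e, he, rfl⟩; exact hf2 e he
  have hinj : Set.InjOn f M := by
    intro e1 h1 e2 h2 heq
    by_contra hne
    exact (hM.2 h1 h2 hne (f e1) (hf1 e1 h1)) (heq ▸ hf1 e2 h2)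
  have h1 : M.ncard = (Set.image f M).ncard := (Set.ncard_image_of_injOn hinj).symm
  have h2 : (Set.image f M).ncard ≤ sᶜ.ncard := Set.ncard_le_ncard himg (Set.finite_univ.subset (Set.subset_univ _))
  have h3 : s.ncard + sᶜ.ncard = Fintype.card V := by
    rw [Set.ncard_add_ncard_compl, Nat.card_eq_fintype_card]
  omega

end sup

section leaf
variable {V' : Type*} [Fintype V'] {G : SimpleGraph V'}

lemma exists_leaf (hG : G.IsAcyclic) (hE : ∃ a b, G.Adj a b) :
    ∃ l p, G.Adj l p ∧ ∀ y, G.Adj l y → y = p := by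
  classical
  set P := {k | ∃ (a b : V') (w : G.Walk a b), w.IsPath ∧ w.length = k} with hP
  have h1 : 1 ∈ P := by
    obtain ⟨a, b, hab⟩ := hE
    exact ⟨a, b, .cons hab .nil, by simp [Walk.cons_isPath_iff, hab.ne], rfl⟩
  have hbdd : BddAbove P := ⟨Fintype.card V', by rintro k ⟨a, b, w, hw, rfl⟩; exact hw.length_lt.le⟩
  obtain ⟨a, b, w, hw, hlen⟩ := Nat.sSup_mem ⟨1, h1⟩ hbdd
  have hge1 : 1 ≤ sSup P := le_csSup hbdd h1
  have hr : (w.reverse).IsPath := hw.reverse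
  have hrlen : (w.reverse).length = sSup P := by simpa using hlen
  clear hlen hw
  rcases hrev : w.reverse with _ | ⟨hadj, r0⟩
  · rw [hrev] at hrlen; simp at hrlen; omega
  · rename_i c
    refine ⟨b, c, hadj, ?_⟩
    intro y hby
    have hysup : y ∈ (w.reverse).support := by
      by_contra hnot
      have hp2 : (Walk.cons (hby.symm) w.reverse).IsPath :=
        (Walk.cons_isPath_iff _ _).2 ⟨hr, hnot⟩
      have hmem2 : sSup P + 1 ∈ P := ⟨y, a, _, hp2, by simp [hrlen]⟩
      have := le_csSup hbdd hmem2; omega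
    have htake := Walk.take_spec w.reverse hysup
    have htpath : ((w.reverse).takeUntil y hysup).IsPath := hr.takeUntil hysup
    have hedge : (Walk.cons hby .nil : G.Walk b y).IsPath := by
      simp [Walk.cons_isPath_iff, hby.ne]
    have hEq : (w.reverse).takeUntil y hysup = Walk.cons hby .nil := by
      have := hG.path_unique ⟨_, htpath⟩ ⟨_, hedge⟩
      exact congrArg Subtype.val this
    have hdec : w.reverse = Walk.cons hby ((w.reverse).dropUntil y hysup) := by
      conv_lhs => rw [← htake, hEq]
      rw [Walk.cons_append, Walk.nil_append]
    have hs1 := congrArg Walk.support hrev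
    have hs2 := congrArg Walk.support hdec
    have hlist : r0.support = ((w.reverse).dropUntil y hysup).support := by
      have h3 := hs1.symm.trans hs2
      simpa [Walk.support_cons] using h3
    rw [Walk.support_eq_cons r0, Walk.support_eq_cons ((w.reverse).dropUntil y hysup)] at hlist
    exact (List.head_eq_of_cons_eq hlist).symm

end leaf

section forest

lemma induce_acyclic {V' : Type u} {G : SimpleGraph V'} (hG : G.IsAcyclic) (s : Set V') :
    (G.induce s).IsAcyclic := by
  intro x c hc
  exact hG (c.map ⟨Subtype.val, fun {a b} h => h⟩)
    (hc.map (f := ⟨Subtype.val, fun {a b} h => h⟩) Subtype.val_injective)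

lemma matching_disj_symm {V' : Type u} :
    Symmetric (fun (e f : Sym2 V') => ∀ x, x ∈ e → x ∉ f) := by
  intro e f h x hxf hxe
  exact h x hxe hxf

lemma forest_sum : ∀ (n : ℕ) {V' : Type u} [Fintype V'] (G : SimpleGraph V'),
    Fintype.card V' ≤ n → G.IsAcyclic →
    ∃ (S : Set V') (M : Set (Sym2 V')), G.IsIndepSet' S ∧ G.IsMatchingSet M ∧
      S.ncard + M.ncard = Fintype.card V' := by
  intro n
  induction n with
  | zero =>
    intro V' _ G hcard _
    refine ⟨∅, ∅, Set.pairwise_empty _, ⟨Set.empty_subset _, Set.pairwise_empty _⟩, ?_⟩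
    simp; omega
  | succ n ih =>
    intro V' _ G hcard hG
    classical
    by_cases hE : ∃ a b, G.Adj a b
    · obtain ⟨l, p, hlp, huniq⟩ := exists_leaf hG hE
      set s : Set V' := ({l, p} : Set V')ᶜ with hs
      have hlns : l ∉ s := by simp [hs]
      have hpns : p ∉ s := by simp [hs]
      have hmem_s : ∀ x : V', x ∈ s ↔ (x ≠ l ∧ x ≠ p) := by intro x; simp [hs]
      have hfcard : Fintype.card ↥s = s.ncard := by
        rw [← Nat.card_coe_set_eq, Nat.card_eq_fintype_card]
      have hcard2 : 2 + s.ncard = Fintype.card V' := by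
        have h2 : ({l, p} : Set V').ncard = 2 := Set.ncard_pair hlp.ne
        have := Set.ncard_add_ncard_compl ({l, p} : Set V')
        rw [h2, Nat.card_eq_fintype_card] at this
        exact this
      have hle : Fintype.card ↥s ≤ n := by omega
      obtain ⟨S'', M'', hSi, hMi, hsum⟩ := ih (G.induce s) hle (induce_acyclic hG s)
      -- lift
      refine ⟨insert l (Subtype.val '' S''), insert s(l, p) (Sym2.map Subtype.val '' M''), ?_, ?_, ?_⟩
      · -- independent
        have hsym : Symmetric (fun a b : V' => ¬ G.Adj a b) := fun a b h hadj => h hadj.symm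
        show (insert l (Subtype.val '' S'')).Pairwise fun a b => ¬ G.Adj a b
        haveI : Std.Symm (fun a b : V' => ¬ G.Adj a b) := ⟨fun a b h => hsym h⟩; rw [Set.pairwise_insert_of_symm]
        constructor
        · rintro x ⟨x', hx', rfl⟩ y ⟨y', hy', rfl⟩ hne hadj
          exact hSi hx' hy' (fun h => hne (congrArg Subtype.val h)) hadj
        · rintro x ⟨x', hx', rfl⟩ _ hadj
          exact ((hmem_s x').1 x'.2).2 (huniq _ hadj)
      · constructor
        · rintro e (rfl | ⟨e', he', rfl⟩)
          · exact hlp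
          · induction e' with
            | _ a b =>
              have h0 := hMi.1 he'
              rw [SimpleGraph.mem_edgeSet] at h0
              rw [Sym2.map_pair_eq, SimpleGraph.mem_edgeSet]
              exact h0
        · haveI : Std.Symm (fun (e f : Sym2 V') => ∀ x, x ∈ e → x ∉ f) := ⟨fun a b h => matching_disj_symm h⟩; rw [Set.pairwise_insert_of_symm]
          constructor
          · intro e1 he1 e2 he2 hne x hx1 hx2
            obtain ⟨e1', he1', heq1⟩ := he1
            obtain ⟨e2', he2', heq2⟩ := he2
            subst heq1; subst heq2
            have hne' : e1' ≠ e2' := fun h => hne (congrArg _ h)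
            obtain ⟨x1, hx1', rfl⟩ := Sym2.mem_map.1 hx1
            obtain ⟨x2, hx2', hx2v⟩ := Sym2.mem_map.1 hx2
            have : x1 = x2 := Subtype.val_injective hx2v.symm
            exact hMi.2 he1' he2' hne' x1 hx1' (this ▸ hx2')
          · intro e he _ x hx1 hx2
            obtain ⟨e', he', heq⟩ := he
            subst heq
            obtain ⟨x', hx', rfl⟩ := Sym2.mem_map.1 hx2
            rw [Sym2.mem_iff] at hx1
            rcases hx1 with h | h
            · exact hlns (h ▸ x'.2)
            · exact hpns (h ▸ x'.2)
      · -- cardinalities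
        have hlni : l ∉ Subtype.val '' S'' := by
          rintro ⟨x', _, heq⟩; exact hlns (heq ▸ x'.2)
        have hlpni : s(l, p) ∉ Sym2.map Subtype.val '' M'' := by
          rintro ⟨e', _, heq⟩
          have : l ∈ Sym2.map Subtype.val e' := heq.symm ▸ Sym2.mem_mk_left l p
          obtain ⟨x', _, hx'⟩ := Sym2.mem_map.1 this
          exact hlns (hx' ▸ x'.2)
        rw [Set.ncard_insert_of_notMem hlni, Set.ncard_insert_of_notMem hlpni,
          Set.ncard_image_of_injective _ Subtype.val_injective,
          Set.ncard_image_of_injective _ (Sym2.map.injective Subtype.val_injective)]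
        rw [hfcard] at hsum
        omega
    · push_neg at hE
      refine ⟨Set.univ, ∅, fun a _ b _ _ hadj => hE a b hadj,
        ⟨Set.empty_subset _, Set.pairwise_empty _⟩, ?_⟩
      simp [Set.ncard_univ, Nat.card_eq_fintype_card]

end forest

section contract
variable {T : SimpleGraph V} {u v : V}

lemma contract_connected (hT : T.Connected) (huv : T.Adj u v) :
    (T.contractEdge u v).Connected := by
  classical
  have hvu : v ≠ u := huv.ne'
  set φ : V → {x : V // x ≠ u} := fun w => if h : w = u then ⟨v, hvu⟩ else ⟨w, h⟩ with hφ
  have hφu : φ u = ⟨v, hvu⟩ := dif_pos rfl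
  have hφn : ∀ (w : V) (h : w ≠ u), φ w = ⟨w, h⟩ := fun w h => dif_neg h
  have hadj : ∀ a b : V, T.Adj a b → (T.contractEdge u v).Reachable (φ a) (φ b) := by
    intro a b hab
    by_cases ha : a = u
    · have hab' : T.Adj u b := ha ▸ hab
      have hbu : b ≠ u := hab'.ne'
      rw [ha, hφu, hφn b hbu]
      by_cases hbv : b = v
      · rw [show (⟨b, hbu⟩ : {x : V // x ≠ u}) = ⟨v, hvu⟩ from Subtype.ext hbv]
      · exact SimpleGraph.Adj.reachable
          ⟨fun h => hbv (congrArg Subtype.val h).symm, Or.inr (Or.inl ⟨rfl, hab'⟩)⟩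
    · by_cases hb : b = u
      · have hab' : T.Adj a u := hb ▸ hab
        rw [hb, hφu, hφn a ha]
        by_cases hav : a = v
        · rw [show (⟨a, ha⟩ : {x : V // x ≠ u}) = ⟨v, hvu⟩ from Subtype.ext hav]
        · exact SimpleGraph.Adj.reachable
            ⟨fun h => hav (congrArg Subtype.val h), Or.inr (Or.inr ⟨rfl, hab'.symm⟩)⟩
      · rw [hφn a ha, hφn b hb]
        exact SimpleGraph.Adj.reachable
          ⟨fun h => hab.ne (congrArg Subtype.val h), Or.inl hab⟩
  have hwalk : ∀ (a b : V), T.Walk a b → (T.contractEdge u v).Reachable (φ a) (φ b) := by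
    intro a b w
    induction w with
    | nil => exact Reachable.refl _
    | cons h _ ih => exact (hadj _ _ h).trans ih
  haveI : Nonempty {x : V // x ≠ u} := ⟨⟨v, hvu⟩⟩
  refine Connected.mk ?_
  intro x y
  have := hwalk x.1 y.1 (hT.preconnected x.1 y.1).some
  rwa [hφn x.1 x.2, hφn y.1 y.2, Subtype.coe_eta, Subtype.coe_eta] at this

end contract

section acyclic
variable {T : SimpleGraph V} {u v : V}

lemma contract_acyclic (hT : T.IsTree) (huv : T.Adj u v) :
    (T.contractEdge u v).IsAcyclic := by
  classical
  set C := T.contractEdge u v with hC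
  set F : {x : V // x ≠ u} → {x : V // x ≠ u} → Sym2 V := fun a b =>
    if T.Adj a.1 b.1 then s(a.1, b.1) else if a.1 = v then s(u, b.1) else s(u, a.1) with hF
  have hFgen : ∀ a b, T.Adj a.1 b.1 → F a b = s(a.1, b.1) := by
    intro a b h; simp only [hF]; rw [if_pos h]
  have hFv1 : ∀ a b, ¬T.Adj a.1 b.1 → a.1 = v → F a b = s(u, b.1) := by
    intro a b h h'; simp only [hF]; rw [if_neg h, if_pos h']
  have hFv2 : ∀ a b, ¬T.Adj a.1 b.1 → a.1 ≠ v → F a b = s(u, a.1) := by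
    intro a b h h'; simp only [hF]; rw [if_neg h, if_neg h']
  have hbv' : ∀ (c d : {x : V // x ≠ u}), C.Adj c d → ¬T.Adj c.1 d.1 → c.1 ≠ v →
      (d.1 = v ∧ T.Adj u c.1) := by
    rintro c d ⟨hne'', hor''⟩ hnadj hcv
    rcases hor'' with h | h | h
    · exact absurd h hnadj
    · exact absurd h.1 hcv
    · exact h
  have hav' : ∀ (c d : {x : V // x ≠ u}), C.Adj c d → ¬T.Adj c.1 d.1 → c.1 = v →
      T.Adj u d.1 := by
    rintro c d ⟨hne'', hor''⟩ hnadj hcv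
    rcases hor'' with h | h | h
    · exact absurd h hnadj
    · exact h.2
    · exact absurd (hcv.trans h.1.symm) (fun hh => hne'' (Subtype.ext hh))
  have hlift : ∀ (x y : {x : V // x ≠ u}) (p : C.Walk x y), ∃ q : T.Walk x.1 y.1,
      ∀ f ∈ q.edges, f = s(u, v) ∨ ∃ a b, s(a, b) ∈ p.edges ∧ f = F a b := by
    intro x y p
    induction p with
    | nil => exact ⟨.nil, by simp⟩
    | @cons x' z' y' h p' ih =>
      obtain ⟨q', hq'⟩ := ih
      have hCadj : C.Adj x' z' := h
      obtain ⟨hne, hor⟩ := id h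
      by_cases hadj : T.Adj x'.1 z'.1
      · refine ⟨.cons hadj q', ?_⟩
        intro f hf
        rw [Walk.edges_cons, List.mem_cons] at hf
        rcases hf with rfl | hf
        · exact Or.inr ⟨x', z', by simp [Walk.edges_cons], (hFgen x' z' hadj).symm⟩
        · rcases hq' f hf with h1 | ⟨a, b, hab, hFab⟩
          · exact Or.inl h1
          · exact Or.inr ⟨a, b, by simp [Walk.edges_cons, hab], hFab⟩
      · by_cases hxv : x'.1 = v
        · have huz : T.Adj u z'.1 := hav' x' z' hCadj hadj hxv
          refine ⟨Walk.cons (show T.Adj x'.1 u by rw [hxv]; exact huv.symm)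
            (Walk.cons huz q'), ?_⟩
          intro f hf
          simp only [Walk.edges_cons, List.mem_cons] at hf
          rcases hf with rfl | rfl | hf
          · exact Or.inl (by rw [hxv]; exact Sym2.eq_swap)
          · exact Or.inr ⟨x', z', by simp [Walk.edges_cons], (hFv1 x' z' hadj hxv).symm⟩
          · rcases hq' f hf with h1 | ⟨a, b, hab, hFab⟩
            · exact Or.inl h1
            · exact Or.inr ⟨a, b, by simp [Walk.edges_cons, hab], hFab⟩
        · obtain ⟨hzv, hux⟩ := hbv' x' z' hCadj hadj hxv
          refine ⟨Walk.cons hux.symm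
            (Walk.cons (show T.Adj u z'.1 by rw [hzv]; exact huv) q'), ?_⟩
          intro f hf
          simp only [Walk.edges_cons, List.mem_cons] at hf
          rcases hf with rfl | rfl | hf
          · exact Or.inr ⟨x', z', by simp [Walk.edges_cons],
              Sym2.eq_swap.trans (hFv2 x' z' hadj hxv).symm⟩
          · exact Or.inl (by rw [hzv])
          · rcases hq' f hf with h1 | ⟨a, b, hab, hFab⟩
            · exact Or.inl h1
            · exact Or.inr ⟨a, b, by simp [Walk.edges_cons, hab], hFab⟩
  have hTb : ∀ ⦃a b : V⦄, T.Adj a b → T.IsBridge s(a, b) :=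
    isAcyclic_iff_forall_adj_isBridge.mp hT.2
  rw [isAcyclic_iff_forall_adj_isBridge]
  intro x y hxy
  rw [isBridge_iff_forall_walk_mem_edges]
  refine fun p => ?_
  by_contra hns
  obtain ⟨q, hq⟩ := hlift x y p
  have hCxy : C.Adj x y := hxy
  obtain ⟨hne, hor⟩ := hxy
  have hFanal : ∀ (a b : {x : V // x ≠ u}), C.Adj a b → s(a, b) ∈ p.edges →
      F a b = F x y → False := by
    intro a b hCab habe hFeq
    apply hns
    have hne' : a ≠ b := hCab.1
    by_cases hadjxy : T.Adj x.1 y.1 <;> by_cases hadjab : T.Adj a.1 b.1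
    · rw [hFgen a b hadjab, hFgen x y hadjxy, Sym2.eq_iff] at hFeq
      rcases hFeq with ⟨h1, h2⟩ | ⟨h1, h2⟩
      · rwa [show a = x from Subtype.ext h1, show b = y from Subtype.ext h2] at habe
      · rw [show a = y from Subtype.ext h1, show b = x from Subtype.ext h2] at habe
        rwa [Sym2.eq_swap] at habe
    · exfalso
      have hu : u ∈ F a b := by
        by_cases hav : a.1 = v
        · rw [hFv1 a b hadjab hav]; exact Sym2.mem_mk_left _ _
        · rw [hFv2 a b hadjab hav]; exact Sym2.mem_mk_left _ _
      rw [hFeq, hFgen x y hadjxy, Sym2.mem_iff] at hu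
      rcases hu with h | h
      · exact x.2 h.symm
      · exact y.2 h.symm
    · exfalso
      have hu : u ∈ F x y := by
        by_cases hxv : x.1 = v
        · rw [hFv1 x y hadjxy hxv]; exact Sym2.mem_mk_left _ _
        · rw [hFv2 x y hadjxy hxv]; exact Sym2.mem_mk_left _ _
      rw [← hFeq, hFgen a b hadjab, Sym2.mem_iff] at hu
      rcases hu with h | h
      · exact a.2 h.symm
      · exact b.2 h.symm
    · by_cases hav : a.1 = v <;> by_cases hxv : x.1 = v
      · rw [hFv1 a b hadjab hav, hFv1 x y hadjxy hxv, Sym2.eq_iff] at hFeq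
        rcases hFeq with ⟨_, h2⟩ | ⟨h1, _⟩
        · rwa [show a = x from Subtype.ext (hav.trans hxv.symm),
            show b = y from Subtype.ext h2] at habe
        · exact absurd h1.symm y.2
      · obtain ⟨hyv, hux⟩ := hbv' x y hCxy hadjxy hxv
        rw [hFv1 a b hadjab hav, hFv2 x y hadjxy hxv, Sym2.eq_iff] at hFeq
        rcases hFeq with ⟨_, h2⟩ | ⟨h1, _⟩
        · rw [show a = y from Subtype.ext (hav.trans hyv.symm),
            show b = x from Subtype.ext h2] at habe
          rwa [Sym2.eq_swap] at habe
        · exact absurd h1.symm x.2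
      · obtain ⟨hbv, hua⟩ := hbv' a b hCab hadjab hav
        rw [hFv2 a b hadjab hav, hFv1 x y hadjxy hxv, Sym2.eq_iff] at hFeq
        rcases hFeq with ⟨_, h2⟩ | ⟨h1, _⟩
        · rw [show a = y from Subtype.ext h2,
            show b = x from Subtype.ext (hbv.trans hxv.symm)] at habe
          rwa [Sym2.eq_swap] at habe
        · exact absurd h1.symm y.2
      · obtain ⟨hbv, hua⟩ := hbv' a b hCab hadjab hav
        obtain ⟨hyv, hux⟩ := hbv' x y hCxy hadjxy hxv
        rw [hFv2 a b hadjab hav, hFv2 x y hadjxy hxv, Sym2.eq_iff] at hFeq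
        rcases hFeq with ⟨_, h2⟩ | ⟨h1, _⟩
        · rwa [show a = x from Subtype.ext h2,
            show b = y from Subtype.ext (hbv.trans hyv.symm)] at habe
        · exact absurd h1.symm x.2
  by_cases hadjxy : T.Adj x.1 y.1
  · have hbridge := (isBridge_iff_forall_walk_mem_edges.mp (hTb hadjxy)) q
    rcases hq _ hbridge with h1 | ⟨a, b, hab, hFab⟩
    · have hu : u ∈ s(x.1, y.1) := by rw [h1]; exact Sym2.mem_mk_left u v
      rw [Sym2.mem_iff] at hu
      rcases hu with h | h
      · exact x.2 h.symm
      · exact y.2 h.symm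
    · exact hFanal a b (Walk.adj_of_mem_edges p hab) hab
        (hFab.symm.trans (hFgen x y hadjxy).symm)
  · by_cases hxv : x.1 = v
    · have huy : T.Adj u y.1 := hav' x y hCxy hadjxy hxv
      have hq2 := (isBridge_iff_forall_walk_mem_edges.mp (hTb huy))
        (Walk.cons (show T.Adj u x.1 by rw [hxv]; exact huv) q)
      rw [Walk.edges_cons, List.mem_cons] at hq2
      rcases hq2 with heq | hq2
      · rw [Sym2.eq_iff] at heq
        rcases heq with ⟨_, h2⟩ | ⟨h1, _⟩
        · exact hne (Subtype.ext h2.symm)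
        · exact x.2 h1.symm
      · rcases hq _ hq2 with h1 | ⟨a, b, hab, hFab⟩
        · rw [Sym2.eq_iff] at h1
          rcases h1 with ⟨_, h2⟩ | ⟨h1, _⟩
          · exact hne (Subtype.ext (hxv.trans h2.symm))
          · exact huv.ne h1
        · exact hFanal a b (Walk.adj_of_mem_edges p hab) hab
            (hFab.symm.trans (hFv1 x y hadjxy hxv).symm)
    · obtain ⟨hyv, hux⟩ := hbv' x y hCxy hadjxy hxv
      have hq2 := (isBridge_iff_forall_walk_mem_edges.mp (hTb hux))
        (Walk.cons (show T.Adj u y.1 by rw [hyv]; exact huv) q.reverse)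
      rw [Walk.edges_cons, List.mem_cons, Walk.edges_reverse, List.mem_reverse] at hq2
      rcases hq2 with heq | hq2
      · rw [Sym2.eq_iff] at heq
        rcases heq with ⟨_, h2⟩ | ⟨h1, _⟩
        · exact hne (Subtype.ext h2)
        · exact y.2 h1.symm
      · rcases hq _ hq2 with h1 | ⟨a, b, hab, hFab⟩
        · rw [Sym2.eq_iff] at h1
          rcases h1 with ⟨_, h2⟩ | ⟨h1, _⟩
          · exact hxv h2
          · exact huv.ne h1
        · exact hFanal a b (Walk.adj_of_mem_edges p hab) hab
            (hFab.symm.trans (hFv2 x y hadjxy hxv).symm)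

end acyclic

section mnum
variable [Fintype V] {T : SimpleGraph V} {u v : V}

lemma sym2_exists_mem (z : Sym2 V) : ∃ x, x ∈ z :=
  Sym2.ind (fun a b => ⟨a, Sym2.mem_mk_left a b⟩) z

lemma contract_matchingNum_ge (huv : T.Adj u v) {M : Set (Sym2 V)} (hM : T.IsMatchingSet M)
    (hunsat : ∀ e ∈ M, u ∉ e) : M.ncard ≤ (T.contractEdge u v).matchingNum := by
  classical
  set C := T.contractEdge u v with hC
  set M' : Set (Sym2 {x : V // x ≠ u}) := {e | Sym2.map Subtype.val e ∈ M} with hM'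
  have himg : Sym2.map Subtype.val '' M' = M := by
    apply Set.Subset.antisymm
    · rintro f ⟨e, he, rfl⟩; exact he
    · intro f hf
      have hfe : f ∈ T.edgeSet := hM.1 hf
      induction f with
      | _ a b =>
        have hadj : T.Adj a b := (T.mem_edgeSet).1 hfe
        have hau : a ≠ u := fun h => hunsat _ hf (h ▸ Sym2.mem_mk_left a b)
        have hbu : b ≠ u := fun h => hunsat _ hf (h ▸ Sym2.mem_mk_right a b)
        refine ⟨s(⟨a, hau⟩, ⟨b, hbu⟩), ?_, by rw [Sym2.map_pair_eq]⟩
        show Sym2.map Subtype.val s(⟨a, hau⟩, ⟨b, hbu⟩) ∈ M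
        rw [Sym2.map_pair_eq]; exact hf
  have hmatch : C.IsMatchingSet M' := by
    constructor
    · intro e he
      induction e with
      | _ a b =>
        have : Sym2.map Subtype.val s(a, b) ∈ M := he
        rw [Sym2.map_pair_eq] at this
        have hadj : T.Adj a.1 b.1 := (T.mem_edgeSet).1 (hM.1 this)
        exact (C.mem_edgeSet).2 ⟨fun h => hadj.ne (congrArg Subtype.val h), Or.inl hadj⟩
    · intro e1 he1 e2 he2 hne x hx1 hx2
      have hne' : Sym2.map Subtype.val e1 ≠ Sym2.map Subtype.val e2 :=
        fun h => hne (Sym2.map.injective Subtype.val_injective h)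
      have hx1' : x.1 ∈ Sym2.map Subtype.val e1 := Sym2.mem_map.2 ⟨x, hx1, rfl⟩
      have hx2' : x.1 ∈ Sym2.map Subtype.val e2 := Sym2.mem_map.2 ⟨x, hx2, rfl⟩
      exact hM.2 he1 he2 hne' x.1 hx1' hx2'
  have hcard : M'.ncard = M.ncard := by
    rw [← himg, Set.ncard_image_of_injective _ (Sym2.map.injective Subtype.val_injective)]
  calc M.ncard = M'.ncard := hcard.symm
    _ ≤ C.matchingNum := le_matchingNum C hmatch

lemma contract_matchingNum_le (huv : T.Adj u v) :
    (T.contractEdge u v).matchingNum ≤ T.matchingNum := by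
  classical
  set C := T.contractEdge u v with hC
  apply matchingNum_le
  intro N hN
  set ρ : V → V := fun w => if w = v then u else w with hρ
  set L : Sym2 {x : V // x ≠ u} → Sym2 V := fun e =>
    if Sym2.map Subtype.val e ∈ T.edgeSet then Sym2.map Subtype.val e
    else Sym2.map (ρ ∘ Subtype.val) e with hL
  have hkey : ∀ e ∈ N, L e ∈ T.edgeSet ∧
      (∀ x, x ∈ L e → (x ≠ u → x ∈ Sym2.map Subtype.val e) ∧
        (x = u → v ∈ Sym2.map Subtype.val e)) := by
    intro e he
    have hCe : e ∈ C.edgeSet := hN.1 he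
    induction e with
    | _ a b =>
      obtain ⟨hne, hor⟩ := (C.mem_edgeSet).1 hCe
      by_cases hadj : T.Adj a.1 b.1
      · have hLe : L s(a, b) = s(a.1, b.1) := by
          simp only [hL, Sym2.map_pair_eq]
          rw [if_pos ((T.mem_edgeSet).2 hadj)]
        rw [hLe]
        refine ⟨(T.mem_edgeSet).2 hadj, ?_⟩
        intro x hx
        rw [Sym2.mem_iff] at hx
        constructor
        · intro _
          rw [Sym2.map_pair_eq, Sym2.mem_iff]
          exact hx
        · intro hxu
          rcases hx with h | h
          · exact absurd (hxu ▸ h : u = a.1).symm a.2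
          · exact absurd (hxu ▸ h : u = b.1).symm b.2
      · have hvcase : (a.1 = v ∧ T.Adj u b.1) ∨ (b.1 = v ∧ T.Adj u a.1) := by
          rcases hor with h | h | h
          · exact absurd h hadj
          · exact Or.inl h
          · exact Or.inr h
        have hnm : Sym2.map Subtype.val s(a, b) ∉ T.edgeSet := by
          rw [Sym2.map_pair_eq]
          exact fun hh => hadj ((T.mem_edgeSet).1 hh)
        rcases hvcase with ⟨hav, hub⟩ | ⟨hbv, hua⟩
        · have hbnv : b.1 ≠ v := fun hh => hne (Subtype.ext (hav.trans hh.symm))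
          have hLe : L s(a, b) = s(u, b.1) := by
            simp only [hL, Sym2.map_pair_eq]
            rw [if_neg (show s(a.1, b.1) ∉ T.edgeSet from fun hh => hadj ((T.mem_edgeSet).1 hh))]
            simp only [Function.comp_apply, hρ]
            rw [if_pos hav, if_neg hbnv]
          rw [hLe]
          refine ⟨(T.mem_edgeSet).2 hub, ?_⟩
          intro x hx
          rw [Sym2.mem_iff] at hx
          constructor
          · intro hxu
            rcases hx with h | h
            · exact absurd h hxu
            · rw [Sym2.map_pair_eq, Sym2.mem_iff]; exact Or.inr h
          · intro _
            rw [Sym2.map_pair_eq, Sym2.mem_iff]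
            exact Or.inl hav.symm
        · have hanv : a.1 ≠ v := fun hh => hne (Subtype.ext (hh.trans hbv.symm))
          have hLe : L s(a, b) = s(a.1, u) := by
            simp only [hL, Sym2.map_pair_eq]
            rw [if_neg (show s(a.1, b.1) ∉ T.edgeSet from fun hh => hadj ((T.mem_edgeSet).1 hh))]
            simp only [Function.comp_apply, hρ]
            rw [if_neg hanv, if_pos hbv]
          rw [hLe]
          refine ⟨(T.mem_edgeSet).2 hua.symm, ?_⟩
          intro x hx
          rw [Sym2.mem_iff] at hx
          constructor
          · intro hxu
            rcases hx with h | h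
            · rw [Sym2.map_pair_eq, Sym2.mem_iff]; exact Or.inl h
            · exact absurd h hxu
          · intro _
            rw [Sym2.map_pair_eq, Sym2.mem_iff]
            exact Or.inr hbv.symm
  have hdisj : ∀ e1 ∈ N, ∀ e2 ∈ N, e1 ≠ e2 → ∀ x, x ∈ L e1 → x ∉ L e2 := by
    intro e1 he1 e2 he2 hne x hx1 hx2
    by_cases hxu : x = u
    · have hv1 : v ∈ Sym2.map Subtype.val e1 := ((hkey e1 he1).2 x hx1).2 hxu
      have hv2 : v ∈ Sym2.map Subtype.val e2 := ((hkey e2 he2).2 x hx2).2 hxu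
      obtain ⟨x1, hx1', hv1'⟩ := Sym2.mem_map.1 hv1
      obtain ⟨x2, hx2', hv2'⟩ := Sym2.mem_map.1 hv2
      have : x1 = x2 := Subtype.val_injective (hv1'.trans hv2'.symm)
      exact hN.2 he1 he2 hne x1 hx1' (this ▸ hx2')
    · have hv1 : x ∈ Sym2.map Subtype.val e1 := ((hkey e1 he1).2 x hx1).1 hxu
      have hv2 : x ∈ Sym2.map Subtype.val e2 := ((hkey e2 he2).2 x hx2).1 hxu
      obtain ⟨x1, hx1', hv1'⟩ := Sym2.mem_map.1 hv1
      obtain ⟨x2, hx2', hv2'⟩ := Sym2.mem_map.1 hv2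
      have : x1 = x2 := Subtype.val_injective (hv1'.trans hv2'.symm)
      exact hN.2 he1 he2 hne x1 hx1' (this ▸ hx2')
  have hmatch : T.IsMatchingSet (L '' N) := by
    constructor
    · rintro f ⟨e, he, rfl⟩
      exact (hkey e he).1
    · intro f1 hf1 f2 hf2 hne x hx1 hx2
      obtain ⟨e1, he1, heq1⟩ := hf1
      obtain ⟨e2, he2, heq2⟩ := hf2
      subst heq1; subst heq2
      exact hdisj e1 he1 e2 he2 (fun h => hne (congrArg L h)) x hx1 hx2
  have hinj : Set.InjOn L N := by
    intro e1 he1 e2 he2 heq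
    by_contra hne
    obtain ⟨x, hx⟩ := sym2_exists_mem (L e1)
    exact hdisj e1 he1 e2 he2 hne x hx (heq ▸ hx)
  calc N.ncard = (L '' N).ncard := (Set.ncard_image_of_injOn hinj).symm
    _ ≤ T.matchingNum := le_matchingNum T hmatch

end mnum


/-- Contracting an edge `uv` of a tree `T`, where `u` is unsaturated by a maximum
matching `M`, yields a tree with the same matching number and with independence number one
less. -/
theorem stmt12 {V : Type*} [Fintype V] (T : SimpleGraph V) (hT : T.IsTree)
    (M : Set (Sym2 V)) (hM : T.IsMatchingSet M) (hMmax : M.ncard = T.matchingNum)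
    (u v : V) (huv : T.Adj u v) (hunsat : ∀ e ∈ M, u ∉ e) :
    (T.contractEdge u v).IsTree ∧
      (T.contractEdge u v).matchingNum = T.matchingNum ∧
      (T.contractEdge u v).indepNum' = T.indepNum' - 1 := by
  classical
  set C := T.contractEdge u v with hC
  have hTree : C.IsTree := ⟨contract_connected hT.1 huv, contract_acyclic hT huv⟩
  have hmn_ge : T.matchingNum ≤ C.matchingNum := by
    rw [← hMmax]; exact contract_matchingNum_ge huv hM hunsat
  have hmn : C.matchingNum = T.matchingNum :=
    le_antisymm (contract_matchingNum_le huv) hmn_ge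
  have hcardV : Fintype.card {x : V // x ≠ u} + 1 = Fintype.card V := by
    have h1 : Fintype.card {x : V // x ≠ u} = Fintype.card V - Fintype.card {x : V // x = u} :=
      Fintype.card_subtype_compl _
    have h2 : Fintype.card {x : V // x = u} = 1 := Fintype.card_subtype_eq u
    have h3 : 0 < Fintype.card V := Fintype.card_pos_iff.2 ⟨u⟩
    omega
  obtain ⟨S0, M0, hS0, hM0, hsum0⟩ := forest_sum (Fintype.card V) T le_rfl hT.2
  have hαμ : Fintype.card V ≤ T.indepNum' + T.matchingNum := by
    have ha := le_indepNum T hS0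
    have hb := le_matchingNum T hM0
    omega
  obtain ⟨S1, hS1, hS1card⟩ := exists_max_indep C
  obtain ⟨M1, hM1, hM1card⟩ := exists_max_matching C
  have hweak : C.indepNum' + C.matchingNum ≤ Fintype.card {x : V // x ≠ u} := by
    rw [← hS1card, ← hM1card]; exact indep_add_matching_le C hS1 hM1
  obtain ⟨I, hI, hIcard⟩ := exists_max_indep T
  have hnuv : ¬(u ∈ I ∧ v ∈ I) := fun ⟨hu', hv'⟩ => hI hu' hv' huv.ne huv
  set I' : Set {x : V // x ≠ u} := Subtype.val ⁻¹' (I \ {u, v}) with hI'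
  have hI'img : Subtype.val '' I' = I \ {u, v} := by
    apply Set.Subset.antisymm
    · rintro x ⟨x', hx', rfl⟩; exact hx'
    · intro x hx
      have hxu : x ≠ u := fun h => hx.2 (by simp [h])
      exact ⟨⟨x, hxu⟩, hx, rfl⟩
  have hI'indep : C.IsIndepSet' I' := by
    intro x hx y hy hne hadj
    obtain ⟨hneadj, hor⟩ := hadj
    rcases hor with h | h | h
    · exact hI hx.1 hy.1 (fun hh => hne (Subtype.ext hh)) h
    · exact hx.2 (by simp [h.1])
    · exact hy.2 (by simp [h.1])
  have hI'card : I.ncard ≤ I'.ncard + 1 := by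
    have h1 : I'.ncard = (I \ {u, v}).ncard := by
      rw [← hI'img, Set.ncard_image_of_injective _ Subtype.val_injective]
    have h2 : I.ncard ≤ (I \ {u, v}).ncard + 1 := by
      by_cases hu' : u ∈ I
      · have hv' : v ∉ I := fun hv' => hnuv ⟨hu', hv'⟩
        have hEq : I \ {u, v} = I \ {u} := by
          ext x
          simp only [Set.mem_diff, Set.mem_insert_iff, Set.mem_singleton_iff]
          constructor
          · rintro ⟨hxI, hx2⟩; exact ⟨hxI, fun h => hx2 (Or.inl h)⟩
          · rintro ⟨hxI, hx2⟩
            exact ⟨hxI, fun h => by rcases h with h | h; exact hx2 h; exact hv' (h ▸ hxI)⟩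
        rw [hEq]
        have := Set.ncard_diff_singleton_add_one hu' (I.toFinite)
        omega
      · by_cases hv' : v ∈ I
        · have hEq : I \ {u, v} = I \ {v} := by
            ext x
            simp only [Set.mem_diff, Set.mem_insert_iff, Set.mem_singleton_iff]
            constructor
            · rintro ⟨hxI, hx2⟩; exact ⟨hxI, fun h => hx2 (Or.inr h)⟩
            · rintro ⟨hxI, hx2⟩
              exact ⟨hxI, fun h => by rcases h with h | h; exact hu' (h ▸ hxI); exact hx2 h⟩
          rw [hEq]
          have := Set.ncard_diff_singleton_add_one hv' (I.toFinite)
          omega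
        · have hEq : I \ {u, v} = I := by
            ext x
            simp only [Set.mem_diff, Set.mem_insert_iff, Set.mem_singleton_iff]
            constructor
            · rintro ⟨hxI, _⟩; exact hxI
            · intro hxI
              exact ⟨hxI, fun h => by
                rcases h with h | h
                · exact hu' (h ▸ hxI)
                · exact hv' (h ▸ hxI)⟩
          rw [hEq]; omega
    omega
  have hle1 : T.indepNum' ≤ C.indepNum' + 1 := by
    have := le_indepNum C hI'indep
    omega
  refine ⟨hTree, hmn, ?_⟩
  omega
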